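/- Let Y be an abelian group and l₁, l₂ : Y → ℂ functions with |l_k(u)| = 1, l_k(0) = 1, l_k(−u) = conj(l_k(u)), satisfying l₁(u+v)·l₂(u−v) = l₁(u)·l₂(u)·l₁(v)·l₂(−v) for all u, v ∈ Y. Then l₁(u+v)² = l₁(u)²·l₁(v)² for all u, v ∈ Y, i.e. l₁² is a homomorphism from Y to the unit circle. -/

import Mathlib

theorem stmt_3 {Y : Type*} [AddCommGroup Y] (l₁ l₂ : Y → ℂ)
    (hmod : ∀ u : Y, ‖l₁ u‖ = 1 ∧ ‖l₂ u‖ = 1)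
    (h0 : l₁ 0 = 1 ∧ l₂ 0 = 1)
    (hsym : ∀ u : Y, l₁ (-u) = (starRingEnd ℂ) (l₁ u) ∧
      l₂ (-u) = (starRingEnd ℂ) (l₂ u))
    (heq : ∀ u v : Y,
      l₁ (u + v) * l₂ (u - v) = l₁ u * l₂ u * l₁ v * l₂ (-v)) :
    ∀ u v : Y, (l₁ (u + v)) ^ 2 = (l₁ u) ^ 2 * (l₁ v) ^ 2 := by
  have hl2 : ∀ w : Y, l₂ w * l₂ (-w) = 1 := by
    intro w
    rw [(hsym w).2, Complex.mul_conj, Complex.normSq_eq_norm_sq, (hmod w).2]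
    norm_num
  intro u v
  have h1 := heq u v
  have h2 := heq v u
  have key : (l₁ (u + v) * l₂ (u - v)) * (l₁ (v + u) * l₂ (v - u)) =
      (l₁ u * l₂ u * l₁ v * l₂ (-v)) * (l₁ v * l₂ v * l₁ u * l₂ (-u)) := by
    rw [h1, h2]
  have hvu : v + u = u + v := add_comm v u
  have hd : v - u = -(u - v) := (neg_sub u v).symm
  rw [hvu, hd] at key
  have hcanc := hl2 (u - v)
  have hu := hl2 u
  have hv := hl2 v
  have : l₁ (u + v) ^ 2 * (l₂ (u - v) * l₂ (-(u - v))) =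
      l₁ u ^ 2 * l₁ v ^ 2 * ((l₂ u * l₂ (-u)) * (l₂ v * l₂ (-v))) := by
    ring_nf
    ring_nf at key
    linear_combination key
  rw [hcanc, hu, hv] at this
  simpa using this
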